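/- Let 𝔤₀ be a real Lie algebra with complexification 𝔤, and on 𝔤* define the complex bivector fields c(z) = Σ c_{ij}^k z_k ∂_{z_i} ∧ ∂_{z_j} and c̃(z) = Σ c_{ij}^k z̄_k ∂_{z_i} ∧ ∂_{z_j} (structure constants of a real basis of 𝔤₀). Then (c, c̃) is a complex Poisson pair: [c,c] = [c,c̃] = [c̃,c̃] = 0, and c̃ is invariant under the coadjoint action of a connected group G₀ with Lie algebra 𝔤₀. -/

import Mathlib

open Module

abbrev Cn (n : ℕ) := Fin n → ℂ

/-- Wirtinger derivative ∂f/∂z_r of a (ℝ-differentiable) function f : ℂⁿ → ℂ. -/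
noncomputable def wirt {n : ℕ} (f : Cn n → ℂ) (z : Cn n) (r : Fin n) : ℂ :=
  (1/2) * (fderiv ℝ f z (Pi.single r 1) - Complex.I * fderiv ℝ f z (Pi.single r Complex.I))

/-- Conjugate Wirtinger derivative ∂f/∂z̄_r. -/
noncomputable def wirtBar {n : ℕ} (f : Cn n → ℂ) (z : Cn n) (r : Fin n) : ℂ :=
  (1/2) * (fderiv ℝ f z (Pi.single r 1) + Complex.I * fderiv ℝ f z (Pi.single r Complex.I))

/-- Schouten bracket of two complex bivector fields of type (2,0) on ℂⁿ ≅ 𝔤*,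
given by their coefficients b^{ij}(z) (contraction indices are of z-type, so
only the ∂_{z_r}-derivatives of the coefficients occur):
[b₁,b₂]^{ijk} = ½ Σ_{cyclic ijk} Σ_r ( b₁^{ir} ∂_{z_r} b₂^{jk} + b₂^{ir} ∂_{z_r} b₁^{jk} ). -/
noncomputable def schoutenHol {n : ℕ} (b₁ b₂ : Cn n → Fin n → Fin n → ℂ)
    (z : Cn n) (i j k : Fin n) : ℂ :=
  (1/2) * ((∑ r, (b₁ z i r * wirt (fun w => b₂ w j k) z r
                  + b₂ z i r * wirt (fun w => b₁ w j k) z r))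
         + (∑ r, (b₁ z j r * wirt (fun w => b₂ w k i) z r
                  + b₂ z j r * wirt (fun w => b₁ w k i) z r))
         + (∑ r, (b₁ z k r * wirt (fun w => b₂ w i j) z r
                  + b₂ z k r * wirt (fun w => b₁ w i j) z r)))

/- ### Auxiliary material -/

noncomputable def linCLM {n : ℕ} (c : Fin n → ℂ) : Cn n →L[ℝ] ℂ :=
  ∑ k, c k • ((ContinuousLinearMap.proj k : Cn n →L[ℂ] ℂ).restrictScalars ℝ)

noncomputable def conjCLM' : ℂ →L[ℝ] ℂ := Complex.conjCLE.toContinuousLinearMap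

noncomputable def conjLinCLM {n : ℕ} (c : Fin n → ℂ) : Cn n →L[ℝ] ℂ :=
  ∑ k, c k • (conjCLM'.comp ((ContinuousLinearMap.proj k : Cn n →L[ℂ] ℂ).restrictScalars ℝ))

lemma linCLM_apply {n : ℕ} (c : Fin n → ℂ) (w : Cn n) :
    linCLM c w = ∑ k, c k * w k := by
  simp [linCLM, ContinuousLinearMap.sum_apply, smul_eq_mul]

lemma conjLinCLM_apply {n : ℕ} (c : Fin n → ℂ) (w : Cn n) :
    conjLinCLM c w = ∑ k, c k * (starRingEnd ℂ) (w k) := by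
  simp [conjLinCLM, conjCLM', ContinuousLinearMap.sum_apply, smul_eq_mul]

lemma linCLM_single {n : ℕ} (c : Fin n → ℂ) (r : Fin n) (v : ℂ) :
    linCLM c (Pi.single r v) = c r * v := by
  rw [linCLM_apply]
  simp [Pi.single_apply, mul_ite, Finset.sum_ite_eq']

lemma conjLinCLM_single {n : ℕ} (c : Fin n → ℂ) (r : Fin n) (v : ℂ) :
    conjLinCLM c (Pi.single r v) = c r * (starRingEnd ℂ) v := by
  rw [conjLinCLM_apply]
  simp [Pi.single_apply, apply_ite (starRingEnd ℂ), mul_ite, Finset.sum_ite_eq']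

lemma fderiv_lin {n : ℕ} (c : Fin n → ℂ) (z : Cn n) :
    fderiv ℝ (fun w => ∑ k, c k * w k) z = linCLM c := by
  have : (fun w : Cn n => ∑ k, c k * w k) = ⇑(linCLM c) := by
    funext w; rw [linCLM_apply]
  rw [this, ContinuousLinearMap.fderiv]

lemma fderiv_conjLin {n : ℕ} (c : Fin n → ℂ) (z : Cn n) :
    fderiv ℝ (fun w => ∑ k, c k * (starRingEnd ℂ) (w k)) z = conjLinCLM c := by
  have : (fun w : Cn n => ∑ k, c k * (starRingEnd ℂ) (w k)) = ⇑(conjLinCLM c) := by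
    funext w; rw [conjLinCLM_apply]
  rw [this, ContinuousLinearMap.fderiv]

lemma wirt_lin {n : ℕ} (c : Fin n → ℂ) (z : Cn n) (r : Fin n) :
    wirt (fun w => ∑ k, c k * w k) z r = c r := by
  simp only [wirt, fderiv_lin, linCLM_single]
  linear_combination (-(c r) / 2) * Complex.I_sq

lemma wirtBar_lin {n : ℕ} (c : Fin n → ℂ) (z : Cn n) (r : Fin n) :
    wirtBar (fun w => ∑ k, c k * w k) z r = 0 := by
  simp only [wirtBar, fderiv_lin, linCLM_single]
  linear_combination (c r / 2) * Complex.I_sq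

lemma wirt_conjLin {n : ℕ} (c : Fin n → ℂ) (z : Cn n) (r : Fin n) :
    wirt (fun w => ∑ k, c k * (starRingEnd ℂ) (w k)) z r = 0 := by
  simp only [wirt, fderiv_conjLin, conjLinCLM_single, Complex.conj_I, map_one]
  linear_combination (c r / 2) * Complex.I_sq

lemma wirtBar_conjLin {n : ℕ} (c : Fin n → ℂ) (z : Cn n) (r : Fin n) :
    wirtBar (fun w => ∑ k, c k * (starRingEnd ℂ) (w k)) z r = c r := by
  simp only [wirtBar, fderiv_conjLin, conjLinCLM_single, Complex.conj_I, map_one]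
  linear_combination (-(c r) / 2) * Complex.I_sq

/-- The cyclic key identity following from the (complexified) Jacobi identity
for the structure constants. -/
lemma keySum {n : ℕ} (s : Fin n → Fin n → Fin n → ℝ)
    (J : ∀ i j k m, ∑ r, ((s j k r : ℂ) * s i r m + (s k i r : ℂ) * s j r m
        + (s i j r : ℂ) * s k r m) = 0)
    (f : Fin n → ℂ) (i j k : Fin n) :
    (∑ r, (∑ m, (s i r m : ℂ) * f m) * (s j k r : ℂ))
      + (∑ r, (∑ m, (s j r m : ℂ) * f m) * (s k i r : ℂ))
      + (∑ r, (∑ m, (s k r m : ℂ) * f m) * (s i j r : ℂ)) = 0 := by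
  have h : ∀ a b c : Fin n,
      (∑ r, (∑ m, (s a r m : ℂ) * f m) * (s b c r : ℂ))
        = ∑ m, ∑ r, (s a r m : ℂ) * f m * (s b c r : ℂ) := by
    intro a b c
    simp only [Finset.sum_mul]
    exact Finset.sum_comm

  rw [h i j k, h j k i, h k i j, ← Finset.sum_add_distrib, ← Finset.sum_add_distrib]
  apply Finset.sum_eq_zero
  intro m _
  rw [← Finset.sum_add_distrib, ← Finset.sum_add_distrib]
  have hr : ∀ r, (s i r m : ℂ) * f m * s j k r + (s j r m : ℂ) * f m * s k i r
      + (s k r m : ℂ) * f m * s i j r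
      = f m * ((s j k r : ℂ) * s i r m + (s k i r : ℂ) * s j r m
        + (s i j r : ℂ) * s k r m) := fun r => by ring
  rw [Finset.sum_congr rfl fun r _ => hr r, ← Finset.mul_sum, J, mul_zero]

/-- on 𝔤* (𝔤 = complexification of the real Lie algebra 𝔤₀ with
basis e and structure constants s), the canonical complex bivector fields
c^{ij}(z) = Σ_k s_{ij}^k z_k and c̃^{ij}(z) = Σ_k s_{ij}^k z̄_k form a complex
Poisson pair: [c,c] = [c,c̃] = [c̃,c̃] = 0; moreover c̃ is invariant under the
coadjoint G₀-action, i.e. its Lie derivative along each generator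
ρ(e_{i₀}) = c(z_{i₀}) + conj(c(z_{i₀})) vanishes. -/
theorem stmt14 (n : ℕ) (L : Type*) [LieRing L] [LieAlgebra ℝ L]
    (e : Basis (Fin n) ℝ L)
    (s : Fin n → Fin n → Fin n → ℝ)
    (hs : ∀ i j k, s i j k = e.repr ⁅e i, e j⁆ k)
    (cbiv ctbiv : Cn n → Fin n → Fin n → ℂ)
    (hcbiv : ∀ z i j, cbiv z i j = ∑ k, (s i j k : ℂ) * z k)
    (hct : ∀ z i j, ctbiv z i j = ∑ k, (s i j k : ℂ) * (starRingEnd ℂ) (z k)) :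
    (∀ z i j k, schoutenHol cbiv cbiv z i j k = 0) ∧
    (∀ z i j k, schoutenHol cbiv ctbiv z i j k = 0) ∧
    (∀ z i j k, schoutenHol ctbiv ctbiv z i j k = 0) ∧
    (∀ (i₀ : Fin n) (z : Cn n) (j k : Fin n),
      (∑ r, (cbiv z i₀ r * wirt (fun w => ctbiv w j k) z r
              + (starRingEnd ℂ) (cbiv z i₀ r) * wirtBar (fun w => ctbiv w j k) z r))
        - (∑ r, ctbiv z r k * wirt (fun w => cbiv w i₀ j) z r)
        - (∑ r, ctbiv z j r * wirt (fun w => cbiv w i₀ k) z r) = 0) := by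
  -- antisymmetry of structure constants
  have santi : ∀ i j k, s i j k = - s j i k := by
    intro i j k
    rw [hs, hs, ← lie_skew (e j) (e i), map_neg]
    simp
  -- Jacobi identity for structure constants, real version
  have J0 : ∀ i j k m, ∑ r, (s j k r * s i r m + s k i r * s j r m
      + s i j r * s k r m) = 0 := by
    intro i j k m
    have key : ∀ a b c : Fin n, e.repr ⁅e a, ⁅e b, e c⁆⁆ m = ∑ r, s b c r * s a r m := by
      intro a b c
      conv_lhs => rw [show ⁅e b, e c⁆ = ∑ r, e.repr ⁅e b, e c⁆ r • e r from
        (Basis.sum_repr e _).symm]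
      rw [show ⁅e a, ∑ r, e.repr ⁅e b, e c⁆ r • e r⁆
          = ∑ r, e.repr ⁅e b, e c⁆ r • ⁅e a, e r⁆ by
        rw [← LieAlgebra.ad_apply (R := ℝ), map_sum]
        simp [LieAlgebra.ad_apply]]
      rw [map_sum]
      simp only [map_smul, Finsupp.coe_finset_sum, Finsupp.coe_smul, Finset.sum_apply,
        Pi.smul_apply, smul_eq_mul]
      exact Finset.sum_congr rfl fun r _ => by rw [← hs, ← hs]
    have hj := lie_jacobi (e i) (e j) (e k)
    have hz : e.repr (⁅e i, ⁅e j, e k⁆⁆ + ⁅e j, ⁅e k, e i⁆⁆ + ⁅e k, ⁅e i, e j⁆⁆) m = 0 := by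
      rw [hj]; simp
    rw [map_add, map_add] at hz
    simp only [Finsupp.coe_add, Pi.add_apply] at hz
    rw [key, key, key] at hz
    rw [← hz, ← Finset.sum_add_distrib, ← Finset.sum_add_distrib]
  -- complex version
  have J : ∀ i j k m, ∑ r, ((s j k r : ℂ) * s i r m + (s k i r : ℂ) * s j r m
      + (s i j r : ℂ) * s k r m) = 0 := by
    intro i j k m
    exact_mod_cast J0 i j k m
  -- Wirtinger derivatives of the bivector coefficients
  have hwc : ∀ (j k : Fin n) (z : Cn n) (r : Fin n),
      wirt (fun w => cbiv w j k) z r = (s j k r : ℂ) := by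
    intro j k z r
    rw [show (fun w => cbiv w j k) = fun w : Cn n => ∑ m, (s j k m : ℂ) * w m from
      funext fun w => hcbiv w j k]
    exact wirt_lin _ z r
  have hwct : ∀ (j k : Fin n) (z : Cn n) (r : Fin n),
      wirt (fun w => ctbiv w j k) z r = 0 := by
    intro j k z r
    rw [show (fun w => ctbiv w j k)
        = fun w : Cn n => ∑ m, (s j k m : ℂ) * (starRingEnd ℂ) (w m) from
      funext fun w => hct w j k]
    exact wirt_conjLin _ z r
  have hwbct : ∀ (j k : Fin n) (z : Cn n) (r : Fin n),
      wirtBar (fun w => ctbiv w j k) z r = (s j k r : ℂ) := by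
    intro j k z r
    rw [show (fun w => ctbiv w j k)
        = fun w : Cn n => ∑ m, (s j k m : ℂ) * (starRingEnd ℂ) (w m) from
      funext fun w => hct w j k]
    exact wirtBar_conjLin _ z r
  refine ⟨?_, ?_, ?_, ?_⟩
  · -- [c,c] = 0
    intro z i j k
    have K := keySum s J z i j k
    simp only [schoutenHol, hwc]
    simp only [hcbiv, ← two_mul, ← Finset.mul_sum]
    linear_combination K
  · -- [c,c̃] = 0
    intro z i j k
    have K := keySum s J (fun m => (starRingEnd ℂ) (z m)) i j k
    simp only [schoutenHol, hwc, hwct, mul_zero, zero_add]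
    simp only [hct]
    linear_combination (1/2 : ℂ) * K
  · -- [c̃,c̃] = 0
    intro z i j k
    simp [schoutenHol, hwct]
  · -- invariance of c̃
    intro i₀ z j k
    simp only [hwct, hwc, hwbct, mul_zero, zero_add]
    have hconj : ∀ r, (starRingEnd ℂ) (cbiv z i₀ r)
        = ∑ m, (s i₀ r m : ℂ) * (starRingEnd ℂ) (z m) := by
      intro r
      rw [hcbiv, map_sum]
      exact Finset.sum_congr rfl fun m _ => by
        rw [map_mul, Complex.conj_ofReal]
    have h2 : ∀ r, ctbiv z r k = -∑ m, (s k r m : ℂ) * (starRingEnd ℂ) (z m) := by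
      intro r
      rw [hct, ← Finset.sum_neg_distrib]
      exact Finset.sum_congr rfl fun m _ => by
        rw [santi r k m]; push_cast; ring
    have K := keySum s J (fun m => (starRingEnd ℂ) (z m)) i₀ j k
    have e1 : (∑ r, (starRingEnd ℂ) (cbiv z i₀ r) * (s j k r : ℂ))
        = ∑ r, (∑ m, (s i₀ r m : ℂ) * (starRingEnd ℂ) (z m)) * (s j k r : ℂ) :=
      Finset.sum_congr rfl fun r _ => by rw [hconj r]
    have e2 : (∑ r, ctbiv z r k * (s i₀ j r : ℂ))
        = -∑ r, (∑ m, (s k r m : ℂ) * (starRingEnd ℂ) (z m)) * (s i₀ j r : ℂ) := by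
      rw [← Finset.sum_neg_distrib]
      exact Finset.sum_congr rfl fun r _ => by rw [h2 r]; ring
    have e3 : (∑ r, ctbiv z j r * (s i₀ k r : ℂ))
        = -∑ r, (∑ m, (s j r m : ℂ) * (starRingEnd ℂ) (z m)) * (s k i₀ r : ℂ) := by
      rw [← Finset.sum_neg_distrib]
      refine Finset.sum_congr rfl fun r _ => ?_
      rw [hct z j r, santi i₀ k r]
      push_cast
      ring
    rw [e1, e2, e3]
    linear_combination K
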